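/- Let n ≥ 1 and let y_1 ≥ y_2 ≥ ⋯ ≥ y_n ≥ 0 be real numbers. Let (c_1, …, c_n) be any sequence obtained by interleaving, in some order, the two weight sequences (n−1, n−3, …, n+1−2j) and (n−1, n−3, …, n+1−2(n−j)) for some 0 ≤ j ≤ n (each weight used with its multiplicity from the two sequences). Then Σ_i c_i y_i ≤ (n−1)(y_1+y_2) + (n−3)(y_3+y_4) + ⋯, i.e. the maximum over all such interleavings and all j is attained at j = ⌊n/2⌋ pairing equal weights with consecutive y's; consequently Σ_{i=1}^n 2(n+1−i) y_i − 2 Σ_i c_i y_i ≥ 2(y_1 + y_3 + y_5 + ⋯) ≥ 0, with equality iff all y_i = 0. -/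

import Mathlib

lemma sum_id_lb (s : Finset ℕ) : ∑ m ∈ Finset.range s.card, m ≤ ∑ m ∈ s, m := by
  induction s using Finset.strongInduction with
  | _ s ih =>
    rcases s.eq_empty_or_nonempty with rfl | hs
    · simp
    · set M := s.max' hs with hM
      have hmem := s.max'_mem hs
      have hsub : s ⊆ Finset.range (M + 1) := fun x hx =>
        Finset.mem_range.mpr (Nat.lt_succ_of_le (Finset.le_max' s x hx))
      have hcard : s.card ≤ M + 1 := by simpa using Finset.card_le_card hsub
      have hk : (s.erase M).card = s.card - 1 := Finset.card_erase_of_mem hmem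
      have ihe := ih (s.erase M) (Finset.erase_ssubset hmem)
      have h1 : ∑ m ∈ s, m = M + ∑ m ∈ s.erase M, m := by
        rw [← Finset.add_sum_erase _ _ hmem]
      have h2 : s.card = (s.erase M).card + 1 := by
        rw [hk]; have := Finset.card_pos.mpr hs; omega
      rw [h1, h2, Finset.sum_range_succ]
      have : (s.erase M).card ≤ M := by omega
      omega
lemma sum_f_le (x : ℝ) (s : Finset ℕ) :
    ∑ m ∈ s, (x - 2 * m) ≤ ∑ m ∈ Finset.range s.card, (x - 2 * m) := by
  have key : (∑ m ∈ Finset.range s.card, (m:ℝ)) ≤ ∑ m ∈ s, (m:ℝ) := by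
    have := sum_id_lb s
    calc (∑ m ∈ Finset.range s.card, (m:ℝ)) = ((∑ m ∈ Finset.range s.card, m : ℕ) : ℝ) := by
          push_cast; ring
      _ ≤ ((∑ m ∈ s, m : ℕ) : ℝ) := by exact_mod_cast this
      _ = ∑ m ∈ s, (m:ℝ) := by push_cast; ring
  have h1 : ∑ m ∈ s, (x - 2 * m) = s.card * x - 2 * ∑ m ∈ s, (m:ℝ) := by
    rw [Finset.sum_sub_distrib, Finset.sum_const, ← Finset.mul_sum]; push_cast [nsmul_eq_mul]; ring
  have h2 : ∑ m ∈ Finset.range s.card, (x - 2 * m)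
      = s.card * x - 2 * ∑ m ∈ Finset.range s.card, (m:ℝ) := by
    rw [Finset.sum_sub_distrib, Finset.sum_const, ← Finset.mul_sum]
    simp only [Finset.card_range, nsmul_eq_mul]
  rw [h1, h2]; linarith

-- closed form
lemma sumG (x : ℝ) (a : ℕ) : ∑ m ∈ Finset.range a, (x - 2 * m) = a * (x - (a - 1)) := by
  induction a with
  | zero => simp
  | succ a ih => rw [Finset.sum_range_succ, ih]; push_cast; ring

-- submultiset sum bound
lemma sub_sum_le (x : ℝ) (J : ℕ) (T : Multiset ℝ)
    (hT : T ≤ (Finset.range J).val.map (fun m : ℕ => (x - 2 * m))) :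
    T.sum ≤ ∑ m ∈ Finset.range (Multiset.card T), (x - 2 * m) := by
  set f : ℕ → ℝ := fun m => x - 2 * m with hf
  have hinj : Function.Injective f := by
    intro a b hab
    simp only [hf] at hab
    have : (a : ℝ) = b := by linarith
    exact_mod_cast this
  have hMnd : ((Finset.range J).val.map f).Nodup :=
    Multiset.Nodup.map hinj (Finset.range J).nodup
  have hTnd : T.Nodup := Multiset.nodup_of_le hT hMnd
  set t : Finset ℝ := ⟨T, hTnd⟩ with ht
  have hsubset : ∀ z ∈ t, ∃ m ∈ Finset.range J, f m = z := by
    intro z hz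
    have : z ∈ (Finset.range J).val.map f := Multiset.subset_of_le hT hz
    rcases Multiset.mem_map.mp this with ⟨m, hm, hmz⟩
    exact ⟨m, hm, hmz⟩
  set s : Finset ℕ := (Finset.range J).filter (fun m => f m ∈ t) with hs
  have hts : t = s.image f := by
    ext z
    constructor
    · intro hz
      rcases hsubset z hz with ⟨m, hm, rfl⟩
      exact Finset.mem_image.mpr ⟨m, Finset.mem_filter.mpr ⟨hm, hz⟩, rfl⟩
    · intro hz
      rcases Finset.mem_image.mp hz with ⟨m, hm, rfl⟩
      exact (Finset.mem_filter.mp hm).2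
  have hcard : t.card = s.card := by rw [hts, Finset.card_image_of_injective _ hinj]
  have hsum : T.sum = ∑ m ∈ s, f m := by
    have : T.sum = ∑ z ∈ t, z := by
      rw [Finset.sum]; simp [ht]
    rw [this, hts, Finset.sum_image (fun a _ b _ h => hinj h)]
  have hcard2 : Multiset.card T = s.card := by
    have : Multiset.card T = t.card := rfl
    rw [this, hcard]
  rw [hsum, hcard2]
  exact sum_f_le x s
lemma Dval (n k : ℕ) :
    ∑ i ∈ Finset.Icc 1 k, ((n:ℝ) - 1 - 2 * (((i - 1) / 2 : ℕ) : ℝ))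
      = ((k/2 : ℕ) : ℝ) * ((n:ℝ) - ((k/2 : ℕ) : ℝ))
        + ((k - k/2 : ℕ) : ℝ) * ((n:ℝ) - ((k - k/2 : ℕ) : ℝ)) := by
  induction k with
  | zero => simp
  | succ k ih =>
    rw [Finset.sum_Icc_succ_top (by omega : 1 ≤ k + 1), ih]
    have h0 : (k + 1 - 1) / 2 = k / 2 := by omega
    rw [h0]
    rcases Nat.even_or_odd k with ⟨s, rfl⟩ | ⟨s, rfl⟩
    · have e1 : (s + s) / 2 = s := by omega
      have e2 : s + s - s = s := by omega
      have e3 : (s + s + 1) / 2 = s := by omega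
      have e4 : s + s + 1 - s = s + 1 := by omega
      rw [e1, e2, e3, e4]
      push_cast
      ring
    · have e1 : (2*s+1) / 2 = s := by omega
      have e2 : 2*s+1 - s = s + 1 := by omega
      have e3 : (2*s+1+1) / 2 = s + 1 := by omega
      have e4 : 2*s+1+1 - (s+1) = s + 1 := by omega
      rw [e1, e2, e3, e4]
      push_cast
      ring

lemma A2 (n a b : ℕ) :
    (a:ℝ) * ((n:ℝ) - a) + (b:ℝ) * ((n:ℝ) - b)
      ≤ (((a+b)/2 : ℕ) : ℝ) * ((n:ℝ) - (((a+b)/2 : ℕ) : ℝ))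
        + (((a+b) - (a+b)/2 : ℕ) : ℝ) * ((n:ℝ) - (((a+b) - (a+b)/2 : ℕ) : ℝ)) := by
  set s := (a+b)/2 with hsdef
  set t := (a+b) - (a+b)/2 with htdef
  have hst : s + t = a + b := by omega
  have hstR : (s:ℝ) + (t:ℝ) = (a:ℝ) + (b:ℝ) := by exact_mod_cast congrArg (Nat.cast (R := ℝ)) hst
  have hsq : ((s:ℝ) - (t:ℝ))^2 ≤ ((a:ℝ) - (b:ℝ))^2 := by
    rcases Nat.even_or_odd (a+b) with he | ho
    · have hte : s = t := by rcases he with ⟨m, hm⟩; omega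
      rw [hte, sub_self]
      simpa using sq_nonneg ((a:ℝ) - (b:ℝ))
    · have hab : a ≠ b := fun h => by subst h; simp [Nat.odd_iff] at ho; omega
      have ht : t = s + 1 := by rcases ho with ⟨m, hm⟩; omega
      have h1 : ((s:ℝ) - (t:ℝ))^2 = 1 := by rw [ht]; push_cast; ring
      rw [h1]
      rcases Nat.lt_or_ge a b with h | h
      · have : (a:ℝ) + 1 ≤ b := by exact_mod_cast h
        nlinarith
      · have hba : b < a := by omega
        have : (b:ℝ) + 1 ≤ a := by exact_mod_cast hba
        nlinarith
  nlinarith [hsq, hstR]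

lemma abelSum (e y : ℕ → ℝ) (N : ℕ) :
    ∑ i ∈ Finset.Icc 1 (N+1), e i * y i
      = ∑ k ∈ Finset.Icc 1 N, (∑ i ∈ Finset.Icc 1 k, e i) * (y k - y (k+1))
        + (∑ i ∈ Finset.Icc 1 (N+1), e i) * y (N+1) := by
  induction N with
  | zero => simp
  | succ N ih =>
    rw [Finset.sum_Icc_succ_top (by omega : 1 ≤ N + 1 + 1) (fun i => e i * y i), ih,
        Finset.sum_Icc_succ_top (by omega : 1 ≤ N + 1)
          (fun k => (∑ i ∈ Finset.Icc 1 k, e i) * (y k - y (k+1))),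
        Finset.sum_Icc_succ_top (by omega : 1 ≤ N + 1 + 1) e]
    ring

/-- K-smallness verification for `GL_n(ℝ) ⊂ Sp_{2n}(ℝ)`.  Let `y 1 ≥ ⋯ ≥ y n ≥ 0` and let
`c : ℕ → ℝ` be any interleaving (in some order) of the two weight sequences
`(n−1, n−3, …, n+1−2j)` and `(n−1, n−3, …, n+1−2(n−j))` for some `0 ≤ j ≤ n`
(i.e. the multiset of values `c 1, …, c n` is the union of the two arithmetic sequences).
Then `Σᵢ cᵢ yᵢ ≤ (n−1)(y₁+y₂) + (n−3)(y₃+y₄) + ⋯`, and consequently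
`Σ_{i=1}^n 2(n+1−i) yᵢ − 2 Σᵢ cᵢ yᵢ ≥ 2(y₁+y₃+y₅+⋯) ≥ 0`, with
`2(y₁+y₃+⋯) = 0` iff all `yᵢ = 0`. -/
theorem stmt8 (n : ℕ) (hn : 1 ≤ n) (y : ℕ → ℝ)
    (hdec : ∀ i, 1 ≤ i → i < n → y (i + 1) ≤ y i)
    (hnonneg : ∀ i ∈ Finset.Icc 1 n, 0 ≤ y i)
    (j : ℕ) (hj : j ≤ n) (c : ℕ → ℝ)
    (hc : (Finset.Icc 1 n).val.map c
        = (Finset.range j).val.map (fun m => ((n : ℝ) - 1 - 2 * m))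
          + (Finset.range (n - j)).val.map (fun m => ((n : ℝ) - 1 - 2 * m))) :
    (∑ i ∈ Finset.Icc 1 n, c i * y i)
      ≤ ∑ i ∈ Finset.Icc 1 n, ((n : ℝ) - 1 - 2 * (((i - 1) / 2 : ℕ))) * y i ∧
    2 * (∑ i ∈ (Finset.Icc 1 n).filter (fun i => Odd i), y i)
      ≤ (∑ i ∈ Finset.Icc 1 n, (2 * ((n : ℝ) + 1 - i)) * y i)
          - 2 * (∑ i ∈ Finset.Icc 1 n, c i * y i) ∧
    0 ≤ 2 * (∑ i ∈ (Finset.Icc 1 n).filter (fun i => Odd i), y i) ∧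
    (2 * (∑ i ∈ (Finset.Icc 1 n).filter (fun i => Odd i), y i) = 0
      ↔ ∀ i ∈ Finset.Icc 1 n, y i = 0) := by
  have hc' : (Finset.Icc 1 n).val.map c
      = (Finset.range j).val.map (fun m : ℕ => ((n : ℝ) - 1 - 2 * m))
        + (Finset.range (n - j)).val.map (fun m : ℕ => ((n : ℝ) - 1 - 2 * m)) := by
    rw [hc]; congr 1 <;> simp [Multiset.map_map, Function.comp]
  clear hc
  set d : ℕ → ℝ := fun i => (n : ℝ) - 1 - 2 * (((i - 1) / 2 : ℕ) : ℝ) with hd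
  -- Key prefix bound
  have key : ∀ k, k ≤ n → ∑ i ∈ Finset.Icc 1 k, c i ≤ ∑ i ∈ Finset.Icc 1 k, d i := by
    intro k hk
    set T : Multiset ℝ := (Finset.Icc 1 k).val.map c with hT
    have hTle : T ≤ (Finset.Icc 1 n).val.map c :=
      Multiset.map_le_map (Finset.val_le_iff.mpr (Finset.Icc_subset_Icc_right hk))
    rw [hc'] at hTle
    set M₁ : Multiset ℝ := (Finset.range j).val.map (fun m : ℕ => ((n : ℝ) - 1 - 2 * m)) with hM₁
    set M₂ : Multiset ℝ := (Finset.range (n - j)).val.map (fun m : ℕ => ((n : ℝ) - 1 - 2 * m))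
      with hM₂
    set T₁ : Multiset ℝ := T ∩ M₁ with hT₁def
    set T₂ : Multiset ℝ := T - M₁ with hT₂def
    have hdecomp : T₂ + T₁ = T := Multiset.sub_add_inter T M₁
    have hT₁ : T₁ ≤ M₁ := Multiset.inter_le_right
    have hT₂ : T₂ ≤ M₂ := Multiset.sub_le_iff_le_add.mpr (by rwa [add_comm] at hTle)
    set a : ℕ := Multiset.card T₁ with ha
    set b : ℕ := Multiset.card T₂ with hb
    have hcardT : Multiset.card T = k := by
      rw [hT, Multiset.card_map]; simp [Nat.card_Icc]
    have hab : b + a = k := by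
      rw [ha, hb, ← Multiset.card_add, hdecomp, hcardT]
    have S1 : T₁.sum ≤ (a:ℝ) * ((n:ℝ) - a) := by
      calc T₁.sum ≤ ∑ m ∈ Finset.range a, ((n:ℝ) - 1 - 2 * m) := sub_sum_le _ _ _ hT₁
        _ = (a:ℝ) * ((n:ℝ) - 1 - ((a:ℝ) - 1)) := sumG _ _
        _ = (a:ℝ) * ((n:ℝ) - a) := by ring
    have S2 : T₂.sum ≤ (b:ℝ) * ((n:ℝ) - b) := by
      calc T₂.sum ≤ ∑ m ∈ Finset.range b, ((n:ℝ) - 1 - 2 * m) := sub_sum_le _ _ _ hT₂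
        _ = (b:ℝ) * ((n:ℝ) - 1 - ((b:ℝ) - 1)) := sumG _ _
        _ = (b:ℝ) * ((n:ℝ) - b) := by ring
    have hsum : ∑ i ∈ Finset.Icc 1 k, c i = T₂.sum + T₁.sum := by
      rw [← Multiset.sum_add, hdecomp, hT, Finset.sum]
    calc ∑ i ∈ Finset.Icc 1 k, c i = T₂.sum + T₁.sum := hsum
      _ ≤ (b:ℝ) * ((n:ℝ) - b) + (a:ℝ) * ((n:ℝ) - a) := add_le_add S2 S1
      _ ≤ (((b+a)/2 : ℕ) : ℝ) * ((n:ℝ) - (((b+a)/2 : ℕ) : ℝ))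
            + (((b+a) - (b+a)/2 : ℕ) : ℝ) * ((n:ℝ) - (((b+a) - (b+a)/2 : ℕ) : ℝ)) := A2 n b a
      _ = ∑ i ∈ Finset.Icc 1 k, d i := by rw [hab, hd]; exact (Dval n k).symm
  -- Part 1 via Abel summation
  obtain ⟨N, rfl⟩ : ∃ N, n = N + 1 := ⟨n - 1, by omega⟩
  have part1 : (∑ i ∈ Finset.Icc 1 (N+1), c i * y i)
      ≤ ∑ i ∈ Finset.Icc 1 (N+1), d i * y i := by
    rw [abelSum c y N, abelSum d y N]
    apply add_le_add
    · apply Finset.sum_le_sum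
      intro k hk
      obtain ⟨hk1, hk2⟩ := Finset.mem_Icc.mp hk
      have hy : 0 ≤ y k - y (k+1) := by
        have := hdec k hk1 (by omega)
        linarith
      exact mul_le_mul_of_nonneg_right (key k (by omega)) hy
    · exact mul_le_mul_of_nonneg_right (key (N+1) le_rfl)
        (hnonneg (N+1) (Finset.mem_Icc.mpr ⟨by omega, le_rfl⟩))
  refine ⟨part1, ?_, ?_, ?_⟩
  · -- Part 2
    have h2 : (∑ i ∈ Finset.Icc 1 (N+1), (2 * (((N:ℝ)+1) + 1 - i)) * y i)
        - 2 * (∑ i ∈ Finset.Icc 1 (N+1), d i * y i)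
        = 2 * (∑ i ∈ (Finset.Icc 1 (N+1)).filter (fun i => Odd i), y i) := by
      rw [Finset.sum_filter, Finset.mul_sum, Finset.mul_sum, ← Finset.sum_sub_distrib]
      apply Finset.sum_congr rfl
      intro i hi
      obtain ⟨hi1, hi2⟩ := Finset.mem_Icc.mp hi
      rcases Nat.even_or_odd i with ⟨t, rfl⟩ | ⟨t, rfl⟩
      · have ht1 : 1 ≤ t := by omega
        have hno : ¬ Odd (t + t) := by simp [Nat.odd_iff]; omega
        rw [if_neg hno, mul_zero, hd]
        have e1 : (t + t - 1) / 2 = t - 1 := by omega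
        simp only [e1]
        rw [Nat.cast_sub ht1]
        push_cast
        ring
      · have hodd : Odd (2*t+1) := ⟨t, by omega⟩
        rw [if_pos hodd, hd]
        have e1 : (2*t+1 - 1) / 2 = t := by omega
        simp only [e1]
        push_cast
        ring
    have hcast : ((N+1 : ℕ) : ℝ) = (N:ℝ) + 1 := by push_cast; ring
    rw [show ((N+1 : ℕ) : ℝ) + 1 = ((N:ℝ)+1) + 1 by push_cast; ring] at *
    linarith [h2, part1]
  · -- Part 3
    have : 0 ≤ ∑ i ∈ (Finset.Icc 1 (N+1)).filter (fun i => Odd i), y i :=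
      Finset.sum_nonneg fun i hi => hnonneg i (Finset.mem_filter.mp hi).1
    linarith
  · -- Part 4
    constructor
    · intro h
      have hz : ∀ i ∈ (Finset.Icc 1 (N+1)).filter (fun i => Odd i), y i = 0 := by
        rw [← Finset.sum_eq_zero_iff_of_nonneg
          (fun i hi => hnonneg i (Finset.mem_filter.mp hi).1)]
        linarith
      intro i hi
      obtain ⟨hi1, hi2⟩ := Finset.mem_Icc.mp hi
      rcases Nat.even_or_odd i with ⟨t, rfl⟩ | hodd
      · have ht1 : 1 ≤ t := by omega
        have hmem : t + t - 1 ∈ (Finset.Icc 1 (N+1)).filter (fun i => Odd i) := by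
          refine Finset.mem_filter.mpr ⟨Finset.mem_Icc.mpr ⟨by omega, by omega⟩, ?_⟩
          exact ⟨t - 1, by omega⟩
        have h1 : y (t + t - 1) = 0 := hz _ hmem
        have h2 : y (t + t - 1 + 1) ≤ y (t + t - 1) := hdec _ (by omega) (by omega)
        have h3 : t + t - 1 + 1 = t + t := by omega
        rw [h3] at h2
        have h4 : 0 ≤ y (t + t) := hnonneg _ hi
        linarith
      · exact hz i (Finset.mem_filter.mpr ⟨hi, hodd⟩)
    · intro h
      have : ∑ i ∈ (Finset.Icc 1 (N+1)).filter (fun i => Odd i), y i = 0 :=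
        Finset.sum_eq_zero fun i hi => h i (Finset.mem_filter.mp hi).1
      rw [this, mul_zero]
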